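/- For λ > 0 and q ∈ (0,1), every nonzero minimizer x* of f(x) = λ|x|^q + (1/2)(x-a)^2 with a > 0 satisfies x* > 0 and the stationarity equation x* - a + λq (x*)^{q-1} = 0. -/

import Mathlib

/-- Every nonzero minimizer of `λ|x|^q + (1/2)(x-a)²` with `a > 0` is positive and
satisfies the stationarity equation `x - a + λ q x^(q-1) = 0`. -/
theorem prox_lq_nonzero_minimizer_stationarity (lam q a : ℝ)
    (hlam : 0 < lam) (hq : 0 < q) (hq1 : q < 1) (ha : 0 < a)
    (f : ℝ → ℝ) (hf : ∀ x, f x = lam * |x| ^ q + (1 / 2) * (x - a) ^ 2)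
    (xs : ℝ) (hmin : ∀ y, f xs ≤ f y) (hne : xs ≠ 0) :
    0 < xs ∧ xs - a + lam * q * xs ^ (q - 1) = 0 := by
  have hpos : 0 < xs := by
    rcases lt_trichotomy xs 0 with h | h | h
    · exfalso
      have hm := hmin (-xs)
      rw [hf xs, hf (-xs), abs_neg] at hm
      nlinarith [mul_pos ha (neg_pos.mpr h)]
    · exact absurd h hne
    · exact h
  refine ⟨hpos, ?_⟩
  have h1 : HasDerivAt (fun x : ℝ => lam * x ^ q + (1 / 2) * (x - a) ^ 2)
      (lam * (q * xs ^ (q - 1)) + (xs - a)) xs := by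
    have hr : HasDerivAt (fun x : ℝ => x ^ q) (q * xs ^ (q - 1)) xs :=
      Real.hasDerivAt_rpow_const (Or.inl (ne_of_gt hpos))
    have hs : HasDerivAt (fun x : ℝ => x - a) 1 xs := (hasDerivAt_id xs).sub_const a
    have h2 := (hs.pow 2).const_mul (1 / 2 : ℝ)
    have h2' : HasDerivAt (fun x : ℝ => (1 / 2) * (x - a) ^ 2) (xs - a) xs := by
      exact h2.congr_deriv (by push_cast; ring)
    exact (hr.const_mul lam).add h2'
  have heq : f =ᶠ[nhds xs] fun x : ℝ => lam * x ^ q + (1 / 2) * (x - a) ^ 2 := by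
    filter_upwards [eventually_gt_nhds hpos] with x hx
    rw [hf x, abs_of_pos hx]
  have hd : HasDerivAt f (lam * (q * xs ^ (q - 1)) + (xs - a)) xs :=
    h1.congr_of_eventuallyEq heq
  have hloc : IsLocalMin f xs := Filter.Eventually.of_forall hmin
  have hz := hloc.hasDerivAt_eq_zero hd
  linarith [hz]
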